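/- Let B be a finite list of bids on n goods and p ∈ ℝ^n, and suppose B is locally valid at p, i.e. its indirect utility function f_B is convex on some open ball of positive radius around p. Let B' be the bid list obtained by replacing the value vector of every bid of B by its projection with respect to p (keeping the weights). Then B' is 1/2-valid at p; that is, f_{B'} is convex on the open ball {q ∈ ℝ^n : ‖q − p‖_∞ < 1/2}. -/

import Mathlib

open Finset

noncomputable section

variable {n : ℕ}

/-- Extend a value/price vector in `ℝ^n` by a 0-th coordinate (the reject good) equal to 0. -/
def extVec (b : Fin n → ℝ) : Fin (n + 1) → ℝ := Fin.cons 0 b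

/-- Surplus of good `i` (in `{0,…,n}`) for value vector `b` at price `p`. -/
def surplus (b p : Fin n → ℝ) (i : Fin (n + 1)) : ℝ := extVec b i - extVec p i

/-- Maximal surplus over all goods (including the reject good). -/
def maxSurplus (b p : Fin n → ℝ) : ℝ :=
  Finset.univ.sup' Finset.univ_nonempty (surplus b p)

/-- The bid with value vector `b` demands good `i` at price `p`. -/
def Demands (b p : Fin n → ℝ) (i : Fin (n + 1)) : Prop :=
  ∀ j, surplus b p j ≤ surplus b p i

open Classical in
/-- The set of goods demanded by value vector `b` at price `p`. -/
def demandedSet (b p : Fin n → ℝ) : Finset (Fin (n + 1)) :=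
  Finset.univ.filter fun i => Demands b p i

/-- Indirect utility function of a bid list (bids are pairs of value vector and weight). -/
def indirectUtility (B : List ((Fin n → ℝ) × ℝ)) (p : Fin n → ℝ) : ℝ :=
  (B.map fun bw => bw.2 * maxSurplus bw.1 p).sum

/-- Surplus gap of the bid `b` at `p`: maximal surplus minus the best surplus on
a non-demanded good (junk value when every good is demanded). -/
def surplusGap (b p : Fin n → ℝ) : ℝ :=
  maxSurplus b p - sSup (surplus b p '' {i | i ∉ demandedSet b p})

/-- `B` is `ε`-valid at `p` if its indirect utility function is convex on the open
`L∞`-ball of radius `ε` around `p`. -/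
def epsValid (B : List ((Fin n → ℝ) × ℝ)) (p : Fin n → ℝ) (ε : ℝ) : Prop :=
  ConvexOn ℝ {q : Fin n → ℝ | ‖q - p‖ < ε} (indirectUtility B)

open Classical in
/-- Sum of the weights of bids in `B` that are marginal on both `i` and `i'` at `p`. -/
def marginalWeight (B : List ((Fin n → ℝ) × ℝ)) (p : Fin n → ℝ) (i i' : Fin (n + 1)) : ℝ :=
  (B.map fun bw => if Demands bw.1 p i ∧ Demands bw.1 p i' then bw.2 else 0).sum


open Classical in
/-- The projection of value vector `b` with respect to price `p`: where `I` is the set of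
goods demanded by `b` at `p`, subtract the indicator vector of `{0,…,n} ∖ I` if `0 ∈ I`,
and otherwise add the indicator vector of `I`. (The 0-th coordinate is unaffected in
either case, so this is well-defined as an operation on `ℝ^n`.) -/
def project (b p : Fin n → ℝ) : Fin n → ℝ := fun k =>
  if (0 : Fin (n + 1)) ∈ demandedSet b p then
    b k - (if k.succ ∈ demandedSet b p then 0 else 1)
  else
    b k + (if k.succ ∈ demandedSet b p then 1 else 0)

section Stmt6Aux

lemma mem_demandedSet {n : ℕ} {b p : Fin n → ℝ} {i : Fin (n + 1)} :
    i ∈ demandedSet b p ↔ Demands b p i := by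
  classical
  simp [demandedSet]

lemma demandedSet_nonempty (b p : Fin n → ℝ) : (demandedSet b p).Nonempty := by
  obtain ⟨i, -, hi⟩ := Finset.exists_mem_eq_sup' (Finset.univ_nonempty) (surplus b p)
  exact ⟨i, mem_demandedSet.2 fun j => hi ▸ Finset.le_sup' _ (Finset.mem_univ j)⟩

lemma surplus_eq_max {b p : Fin n → ℝ} {i : Fin (n + 1)} (hi : i ∈ demandedSet b p) :
    surplus b p i = maxSurplus b p :=
  le_antisymm (Finset.le_sup' _ (Finset.mem_univ i))
    (Finset.sup'_le _ _ fun j _ => mem_demandedSet.1 hi j)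

lemma extVec_sub (a b : Fin n → ℝ) : extVec (a - b) = extVec a - extVec b := by
  funext i
  induction i using Fin.cases <;> simp [extVec]

lemma extVec_smul (c : ℝ) (a : Fin n → ℝ) : extVec (c • a) = c • extVec a := by
  funext i
  induction i using Fin.cases <;> simp [extVec]

lemma abs_extVec_sub_le (p q : Fin n → ℝ) (j : Fin (n + 1)) :
    |extVec p j - extVec q j| ≤ ‖q - p‖ := by
  induction j using Fin.cases with
  | zero => simp [extVec]
  | succ k =>
    have h := norm_le_pi_norm (q - p) k
    simp only [Pi.sub_apply, Real.norm_eq_abs] at h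
    rw [abs_sub_comm] at h
    simpa [extVec] using h

lemma sup'_add_const {α : Type*} (s : Finset α) (hs : s.Nonempty) (f : α → ℝ) (c : ℝ) :
    s.sup' hs (fun i => f i + c) = s.sup' hs f + c := by
  have := Finset.comp_sup'_eq_sup'_comp hs (f := f) (fun x => x + c)
    (fun x y => (max_add_add_right x y c).symm)
  exact this.symm

lemma sup'_const_mul {α : Type*} (s : Finset α) (hs : s.Nonempty) (f : α → ℝ) {c : ℝ}
    (hc : 0 ≤ c) : s.sup' hs (fun i => c * f i) = c * s.sup' hs f := by
  have := Finset.comp_sup'_eq_sup'_comp hs (f := f) (fun x => c * x)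
    (fun x y => mul_max_of_nonneg x y hc)
  exact this.symm

lemma list_sum_map_add {α : Type*} (l : List α) (f g : α → ℝ) :
    (l.map fun x => f x + g x).sum = (l.map f).sum + (l.map g).sum := by
  induction l with
  | nil => simp
  | cons a l ih => simp [ih]; ring

/-- The "local linearization" of the indirect utility: max taken only over goods
demanded at `p`. -/
def gfun (B : List ((Fin n → ℝ) × ℝ)) (p q : Fin n → ℝ) : ℝ :=
  (B.map fun bw => bw.2 *
    ((demandedSet bw.1 p).sup' (demandedSet_nonempty bw.1 p)
      fun i => extVec bw.1 i - extVec q i)).sum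

/-- Positively homogeneous part of `gfun`. -/
def phifun (B : List ((Fin n → ℝ) × ℝ)) (p v : Fin n → ℝ) : ℝ :=
  (B.map fun bw => bw.2 *
    ((demandedSet bw.1 p).sup' (demandedSet_nonempty bw.1 p)
      fun i => -extVec v i)).sum

lemma sup'_shift (b p q : Fin n → ℝ) :
    ((demandedSet b p).sup' (demandedSet_nonempty b p) fun i => extVec b i - extVec q i)
      = maxSurplus b p +
        ((demandedSet b p).sup' (demandedSet_nonempty b p) fun i => -extVec (q - p) i) := by
  have h1 : ((demandedSet b p).sup' (demandedSet_nonempty b p)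
      fun i => extVec b i - extVec q i)
      = (demandedSet b p).sup' (demandedSet_nonempty b p)
        fun i => -extVec (q - p) i + maxSurplus b p := by
    refine Finset.sup'_congr _ rfl fun i hi => ?_
    have := surplus_eq_max hi
    rw [extVec_sub]
    simp only [Pi.sub_apply]
    rw [← this]
    simp only [surplus]
    ring
  rw [h1, sup'_add_const, add_comm]

lemma gfun_eq (B : List ((Fin n → ℝ) × ℝ)) (p q : Fin n → ℝ) :
    gfun B p q = indirectUtility B p + phifun B p (q - p) := by
  unfold gfun indirectUtility phifun
  rw [← list_sum_map_add]
  congr 1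
  refine List.map_congr_left fun bw _ => ?_
  rw [sup'_shift bw.1 p q]
  ring

lemma phifun_smul (B : List ((Fin n → ℝ) × ℝ)) (p : Fin n → ℝ) {c : ℝ} (hc : 0 ≤ c)
    (v : Fin n → ℝ) : phifun B p (c • v) = c * phifun B p v := by
  unfold phifun
  rw [← List.sum_map_mul_left]
  refine congrArg _ (List.map_congr_left fun bw _ => ?_)
  rw [show (fun i => -extVec (c • v) i) = fun i => c * (-extVec v i) by
    funext i; rw [extVec_smul]; simp only [Pi.smul_apply, smul_eq_mul]; ring]
  rw [sup'_const_mul _ _ _ hc]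
  ring

lemma exists_eps_single (b p : Fin n → ℝ) :
    ∃ ε > (0:ℝ), ∀ q : Fin n → ℝ, ‖q - p‖ < ε →
      maxSurplus b q = (demandedSet b p).sup' (demandedSet_nonempty b p)
        (fun i => extVec b i - extVec q i) := by
  classical
  by_cases hS : (Finset.univ \ demandedSet b p).Nonempty
  · set M := (Finset.univ \ demandedSet b p).sup' hS (surplus b p) with hM
    have hMlt : M < maxSurplus b p := by
      rw [hM, Finset.sup'_lt_iff]
      intro j hj
      have hj' : ¬ Demands b p j := by
        intro h
        exact (Finset.mem_sdiff.1 hj).2 (mem_demandedSet.2 h)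
      simp only [Demands, not_forall, not_le] at hj'
      obtain ⟨k, hk⟩ := hj'
      exact lt_of_lt_of_le hk (Finset.le_sup' _ (Finset.mem_univ k))
    refine ⟨(maxSurplus b p - M) / 2, by linarith, fun q hq => ?_⟩
    obtain ⟨i, hiI⟩ := demandedSet_nonempty b p
    refine le_antisymm (Finset.sup'_le _ _ fun j _ => ?_)
      (Finset.sup'_le _ _ fun i' hi' => Finset.le_sup' (surplus b q) (Finset.mem_univ i'))
    by_cases hj : j ∈ demandedSet b p
    · exact Finset.le_sup' _ hj
    · have hjM : surplus b p j ≤ M :=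
        Finset.le_sup' _ (Finset.mem_sdiff.2 ⟨Finset.mem_univ j, hj⟩)
      have h1 := abs_extVec_sub_le p q j
      have h2 := abs_extVec_sub_le p q i
      have h3 : surplus b p i = maxSurplus b p := surplus_eq_max hiI
      have hle : surplus b q j ≤ extVec b i - extVec q i := by
        have e1 : surplus b q j = surplus b p j + (extVec p j - extVec q j) := by
          simp only [surplus]; ring
        have e2 : extVec b i - extVec q i = surplus b p i + (extVec p i - extVec q i) := by
          simp only [surplus]; ring
        rw [e1, e2, h3]
        linarith [hjM, (abs_le.1 h1).2, (abs_le.1 h2).1, hq]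
      exact hle.trans (Finset.le_sup' (fun i => extVec b i - extVec q i) hiI)
  · have huniv : demandedSet b p = Finset.univ := by
      rw [Finset.not_nonempty_iff_eq_empty, Finset.sdiff_eq_empty_iff_subset] at hS
      exact le_antisymm (Finset.subset_univ _) hS
    refine ⟨1, one_pos, fun q _ => ?_⟩
    unfold maxSurplus
    exact (Finset.sup'_congr _ huniv.symm fun i _ => rfl)

lemma exists_eps (B : List ((Fin n → ℝ) × ℝ)) (p : Fin n → ℝ) :
    ∃ ε > (0:ℝ), ∀ q : Fin n → ℝ, ‖q - p‖ < ε → indirectUtility B q = gfun B p q := by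
  induction B with
  | nil => exact ⟨1, one_pos, fun q _ => rfl⟩
  | cons bw B ih =>
    obtain ⟨ε₁, hε₁, h1⟩ := ih
    obtain ⟨ε₂, hε₂, h2⟩ := exists_eps_single bw.1 p
    refine ⟨min ε₁ ε₂, lt_min hε₁ hε₂, fun q hq => ?_⟩
    have hq1 := lt_of_lt_of_le hq (min_le_left _ _)
    have hq2 := lt_of_lt_of_le hq (min_le_right _ _)
    unfold indirectUtility gfun at *
    simp only [List.map_cons, List.sum_cons]
    rw [h1 q hq1, h2 q hq2]

lemma extVec_project (b p : Fin n → ℝ) (j : Fin (n + 1)) :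
    extVec (project b p) j = extVec b j +
      ((if (0 : Fin (n + 1)) ∈ demandedSet b p then (0:ℝ) else 1)
        - (if j ∈ demandedSet b p then (0:ℝ) else 1)) := by
  classical
  induction j using Fin.cases with
  | zero =>
    simp only [extVec, Fin.cons_zero]
    split_ifs <;> ring
  | succ k =>
    simp only [extVec, Fin.cons_succ, project]
    split_ifs <;> ring

lemma maxSurplus_project (b p q : Fin n → ℝ) (hq : ‖q - p‖ < 1 / 2) :
    maxSurplus (project b p) q
      = (demandedSet b p).sup' (demandedSet_nonempty b p)
          (fun i => extVec b i - extVec q i)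
        + (if (0 : Fin (n + 1)) ∈ demandedSet b p then (0:ℝ) else 1) := by
  classical
  set c : ℝ := if (0 : Fin (n + 1)) ∈ demandedSet b p then (0:ℝ) else 1 with hc
  obtain ⟨i₀, hi₀⟩ := demandedSet_nonempty b p
  refine le_antisymm (Finset.sup'_le _ _ fun j _ => ?_) ?_
  · by_cases hj : j ∈ demandedSet b p
    · have : surplus (project b p) q j = (extVec b j - extVec q j) + c := by
        simp only [surplus, extVec_project, if_pos hj, hc]
        split_ifs <;> ring
      rw [this]
      exact add_le_add_left (Finset.le_sup' (fun i => extVec b i - extVec q i) hj) c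
    · have e1 : surplus (project b p) q j = (extVec b j - extVec q j) + c - 1 := by
        simp only [surplus, extVec_project, if_neg hj, hc]
        split_ifs <;> ring
      have h1 := abs_extVec_sub_le p q j
      have h2 := abs_extVec_sub_le p q i₀
      have hd : surplus b p j ≤ surplus b p i₀ := mem_demandedSet.1 hi₀ j
      have key : (extVec b j - extVec q j) - 1 ≤ extVec b i₀ - extVec q i₀ := by
        have e2 : extVec b j - extVec q j = surplus b p j + (extVec p j - extVec q j) := by
          simp only [surplus]; ring
        have e3 : extVec b i₀ - extVec q i₀
            = surplus b p i₀ + (extVec p i₀ - extVec q i₀) := by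
          simp only [surplus]; ring
        rw [e2, e3]
        linarith [(abs_le.1 h1).2, (abs_le.1 h2).1, hq]
      rw [e1]
      have : (extVec b j - extVec q j) + c - 1 ≤ (extVec b i₀ - extVec q i₀) + c := by
        linarith
      exact this.trans (add_le_add_left (Finset.le_sup' (fun i => extVec b i - extVec q i) hi₀) c)
  · refine (sup'_add_const _ (demandedSet_nonempty b p) _ _).symm.le.trans ?_
    refine Finset.sup'_le _ _ fun i hi => ?_
    have : (extVec b i - extVec q i) + c = surplus (project b p) q i := by
      simp only [surplus, extVec_project, if_pos hi, hc]
      split_ifs <;> ring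
    rw [this]
    exact Finset.le_sup' (surplus (project b p) q) (Finset.mem_univ i)

end Stmt6Aux


/-- If `B` is locally valid at `p` (i.e. `f_B` is convex on some open ball
of positive radius around `p`) and `B'` is obtained from `B` by replacing every bid's value
vector by its projection with respect to `p` (keeping weights), then `B'` is `1/2`-valid at
`p`: `f_{B'}` is convex on the open `L∞`-ball of radius `1/2` around `p`. -/
theorem stmt6 (n : ℕ) (hn : 1 ≤ n) (B : List ((Fin n → ℝ) × ℝ))
    (hw : ∀ bw ∈ B, bw.2 = 1 ∨ bw.2 = -1)
    (p : Fin n → ℝ) (hvalid : ∃ δ > 0, epsValid B p δ) :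
    epsValid (B.map fun bw => (project bw.1 p, bw.2)) p (1 / 2) := by
  classical
  obtain ⟨δ, hδ, hconv⟩ := hvalid
  obtain ⟨ε₀, hε₀, hfg⟩ := exists_eps B p
  set ε₁ := min δ ε₀ with hε₁def
  have hε₁ : 0 < ε₁ := lt_min hδ hε₀
  have hball : ∀ ε : ℝ, {q : Fin n → ℝ | ‖q - p‖ < ε} = Metric.ball p ε := by
    intro ε; ext q; simp [Metric.mem_ball, dist_eq_norm]
  -- `gfun` is convex on the small ball
  have hgconv : ConvexOn ℝ {q : Fin n → ℝ | ‖q - p‖ < ε₁} (gfun B p) := by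
    refine ⟨by rw [hball]; exact convex_ball p ε₁, ?_⟩
    intro x hx y hy a b ha hb hab
    have hx' : ‖x - p‖ < ε₁ := hx
    have hy' : ‖y - p‖ < ε₁ := hy
    have hmem : a • x + b • y ∈ {q : Fin n → ℝ | ‖q - p‖ < ε₁} := by
      rw [hball] at hx hy ⊢
      exact (convex_ball p ε₁) hx hy ha hb hab
    have hmem' : ‖(a • x + b • y) - p‖ < ε₁ := hmem
    rw [← hfg x (lt_of_lt_of_le hx' (min_le_right _ _)),
      ← hfg y (lt_of_lt_of_le hy' (min_le_right _ _)),
      ← hfg _ (lt_of_lt_of_le hmem' (min_le_right _ _))]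
    exact hconv.2 (lt_of_lt_of_le hx' (min_le_left _ _) : ‖x - p‖ < δ)
      (lt_of_lt_of_le hy' (min_le_left _ _) : ‖y - p‖ < δ) ha hb hab
  have hgp : ∀ z : Fin n → ℝ, gfun B p (p + z) = indirectUtility B p + phifun B p z := by
    intro z
    rw [gfun_eq]
    congr 2
    abel
  -- phifun is midpoint-convex on small vectors
  have hφsmall : ∀ v w : Fin n → ℝ, ‖v‖ < ε₁ → ‖w‖ < ε₁ → ∀ a b : ℝ,
      0 ≤ a → 0 ≤ b → a + b = 1 →
      phifun B p (a • v + b • w) ≤ a * phifun B p v + b * phifun B p w := by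
    intro v w hv hw a b ha hb hab
    have h1 : p + v ∈ {q : Fin n → ℝ | ‖q - p‖ < ε₁} := by
      show ‖p + v - p‖ < ε₁; simpa using hv
    have h2 : p + w ∈ {q : Fin n → ℝ | ‖q - p‖ < ε₁} := by
      show ‖p + w - p‖ < ε₁; simpa using hw
    have hcomb : a • (p + v) + b • (p + w) = p + (a • v + b • w) := by
      funext k
      simp only [Pi.add_apply, Pi.smul_apply, smul_eq_mul]
      linear_combination p k * hab
    have hkey := hgconv.2 h1 h2 ha hb hab
    simp only [smul_eq_mul] at hkey
    rw [hcomb, hgp, hgp, hgp] at hkey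
    set K := indirectUtility B p with hK
    have e : a * (K + phifun B p v) + b * (K + phifun B p w)
        = K + (a * phifun B p v + b * phifun B p w) := by
      linear_combination K * hab
    rw [e] at hkey
    linarith
  -- phifun is convex on all of space
  have hφ : ConvexOn ℝ Set.univ (phifun B p) := by
    refine ⟨convex_univ, fun v _ w _ a b ha hb hab => ?_⟩
    set lam : ℝ := ε₁ / (‖v‖ + ‖w‖ + 1) with hlam
    have hden : (0:ℝ) < ‖v‖ + ‖w‖ + 1 := by positivity
    have hlam0 : 0 < lam := div_pos hε₁ hden
    have hv' : ‖lam • v‖ < ε₁ := by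
      rw [norm_smul, Real.norm_eq_abs, abs_of_pos hlam0]
      calc lam * ‖v‖ < lam * (‖v‖ + ‖w‖ + 1) := by
            apply mul_lt_mul_of_pos_left ?_ hlam0
            nlinarith [norm_nonneg w]
        _ = ε₁ := div_mul_cancel₀ _ (ne_of_gt hden)
    have hw' : ‖lam • w‖ < ε₁ := by
      rw [norm_smul, Real.norm_eq_abs, abs_of_pos hlam0]
      calc lam * ‖w‖ < lam * (‖v‖ + ‖w‖ + 1) := by
            apply mul_lt_mul_of_pos_left ?_ hlam0
            nlinarith [norm_nonneg v]
        _ = ε₁ := div_mul_cancel₀ _ (ne_of_gt hden)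
    have hkey := hφsmall _ _ hv' hw' a b ha hb hab
    have hsc : a • (lam • v) + b • (lam • w) = lam • (a • v + b • w) := by
      rw [smul_comm a lam v, smul_comm b lam w, ← smul_add]
    rw [hsc, phifun_smul B p hlam0.le, phifun_smul B p hlam0.le,
      phifun_smul B p hlam0.le] at hkey
    have h2 : lam * phifun B p (a • v + b • w)
        ≤ lam * (a * phifun B p v + b * phifun B p w) := hkey.trans_eq (by ring)
    exact le_of_mul_le_mul_left h2 hlam0
  -- gfun is convex on the radius 1/2 ball
  have hgconv2 : ConvexOn ℝ {q : Fin n → ℝ | ‖q - p‖ < 1 / 2} (gfun B p) := by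
    refine ⟨by rw [hball]; exact convex_ball _ _, fun x _ y _ a b ha hb hab => ?_⟩
    simp only [smul_eq_mul]
    rw [gfun_eq, gfun_eq, gfun_eq]
    have hcb : a • x + b • y - p = a • (x - p) + b • (y - p) := by
      funext k
      simp only [Pi.add_apply, Pi.sub_apply, Pi.smul_apply, smul_eq_mul]
      linear_combination p k * hab
    rw [hcb]
    have hineq := hφ.2 (Set.mem_univ (x - p)) (Set.mem_univ (y - p)) ha hb hab
    simp only [smul_eq_mul] at hineq
    set K := indirectUtility B p with hK
    have e : a * (K + phifun B p (x - p)) + b * (K + phifun B p (y - p))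
        = K + (a * phifun B p (x - p) + b * phifun B p (y - p)) := by
      linear_combination K * hab
    rw [e]
    linarith
  -- the indirect utility of the projected list agrees with gfun + const on the 1/2 ball
  have hfinal : ∀ q : Fin n → ℝ, ‖q - p‖ < 1 / 2 →
      indirectUtility (B.map fun bw => (project bw.1 p, bw.2)) q
        = gfun B p q + (B.map fun bw => bw.2 *
            (if (0 : Fin (n + 1)) ∈ demandedSet bw.1 p then (0:ℝ) else 1)).sum := by
    intro q hq
    unfold indirectUtility gfun
    rw [List.map_map, ← list_sum_map_add]
    refine congrArg _ (List.map_congr_left fun bw _ => ?_)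
    simp only [Function.comp]
    rw [maxSurplus_project bw.1 p q hq]
    ring
  -- conclude
  unfold epsValid
  have hsetc : Convex ℝ {q : Fin n → ℝ | ‖q - p‖ < 1 / 2} := by
    rw [hball]; exact convex_ball _ _
  refine ⟨hsetc, fun x hx y hy a b ha hb hab => ?_⟩
  have hmem : a • x + b • y ∈ {q : Fin n → ℝ | ‖q - p‖ < 1 / 2} :=
    hsetc hx hy ha hb hab
  simp only [smul_eq_mul]
  rw [hfinal _ hx, hfinal _ hy, hfinal _ hmem]
  have hineq := hgconv2.2 hx hy ha hb hab
  simp only [smul_eq_mul] at hineq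
  set K2 := (B.map fun bw => bw.2 *
    (if (0 : Fin (n + 1)) ∈ demandedSet bw.1 p then (0:ℝ) else 1)).sum with hK2
  have e : a * (gfun B p x + K2) + b * (gfun B p y + K2)
      = (a * gfun B p x + b * gfun B p y) + K2 := by
    linear_combination K2 * hab
  rw [e]
  linarith


end
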